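/- Let 0 < q < 1 and let α be a real number such that neither α nor α − q + 1 is a nonpositive integer. Define the fractional sum D(s) := Σ_{u=1}^s ĥ_{−q}(s−u+1)·ĥ_α(u) for integers s ≥ 0 (empty sum for s = 0). Then for every positive integer t, D(t) − D(t−1) = ĥ_{α−q}(t); that is, the Riemann–Liouville fractional difference of order q satisfies ∇_1^q ĥ_α(t) = ĥ_{α−q}(t). -/

import Mathlib

open Finset

noncomputable def Q (β : ℝ) (n : ℕ) : ℝ :=
  (∏ i ∈ Finset.range n, (β + 1 + i)) / n.factorial

lemma Q_zero (β : ℝ) : Q β 0 = 1 := by simp [Q]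

lemma Q_succ (β : ℝ) (n : ℕ) : Q β (n + 1) = Q β n * ((β + 1 + n) / (n + 1)) := by
  rw [Q, Q, Finset.prod_range_succ, Nat.factorial_succ]
  push_cast
  rw [div_mul_div_comm]
  congr 1
  ring

lemma Q_pascal (β : ℝ) (n : ℕ) : Q β (n + 1) = Q β n + Q (β - 1) (n + 1) := by
  have hn : ((n : ℝ) + 1) ≠ 0 := by positivity
  have h1 : Q (β - 1) (n + 1) = Q β n * (β / (n + 1)) := by
    rw [Q, Q, Finset.prod_range_succ', Nat.factorial_succ]
    push_cast
    have : ∀ i ∈ Finset.range n, (β - 1 + 1 + ((i : ℝ) + 1) : ℝ) = β + 1 + i := by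
      intro i _; ring
    rw [Finset.prod_congr rfl this, div_mul_div_comm]
    congr 1
    · ring
    · ring
  have key : (β + 1 + (n : ℝ)) / ((n : ℝ) + 1) = 1 + β / ((n : ℝ) + 1) := by
    field_simp
    ring
  rw [Q_succ, h1, key]
  ring

lemma rchoose_succ (r : ℝ) (n : ℕ) :
    Ring.choose r (n + 1) = Ring.choose r n * ((r - n) / (n + 1)) := by
  have hX : ((Polynomial.X - (n : Polynomial ℤ)).smeval r) = r - n := by
    rw [Polynomial.smeval_sub, Polynomial.smeval_X, Polynomial.smeval_natCast]
    simp
  have h1 := Ring.descPochhammer_eq_factorial_smul_choose r (n + 1)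
  rw [descPochhammer_succ_right, Polynomial.smeval_mul,
    Ring.descPochhammer_eq_factorial_smul_choose, hX, Nat.factorial_succ,
    nsmul_eq_mul, nsmul_eq_mul] at h1
  push_cast at h1
  have hn : ((n : ℝ) + 1) ≠ 0 := by positivity
  have hf : ((n.factorial : ℝ)) ≠ 0 := by positivity
  have h2 : Ring.choose r n * (r - (n:ℝ)) = ((n:ℝ) + 1) * Ring.choose r (n + 1) :=
    mul_left_cancel₀ hf (by linear_combination h1)
  rw [← mul_div_assoc, eq_div_iff hn]
  linear_combination -h2

lemma Q_eq_choose (x : ℝ) (n : ℕ) : Q x n = (-1 : ℝ) ^ n * Ring.choose (-x - 1) n := by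
  induction n with
  | zero => simp [Q_zero, Ring.choose_zero_right]
  | succ n ih =>
    rw [Q_succ, ih, rchoose_succ]
    push_cast
    ring

lemma Q_conv (x y : ℝ) (n : ℕ) :
    ∑ ij ∈ Finset.HasAntidiagonal.antidiagonal n, Q x ij.1 * Q y ij.2 = Q (x + y + 1) n := by
  have h : ∀ ij ∈ Finset.HasAntidiagonal.antidiagonal n, Q x ij.1 * Q y ij.2
      = (-1:ℝ)^n * (Ring.choose (-x-1) ij.1 * Ring.choose (-y-1) ij.2) := by
    intro ij hij
    rw [Finset.HasAntidiagonal.mem_antidiagonal] at hij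
    rw [Q_eq_choose, Q_eq_choose, ← hij]
    ring
  rw [Finset.sum_congr rfl h, ← Finset.mul_sum, ← Ring.add_choose_eq n (Commute.all _ _),
    Q_eq_choose]
  ring_nf

/-- Generalized binomial coefficient `ĥ_α(x) = Γ(x+α)/(Γ(α+1)·Γ(x))`. -/
noncomputable def hhat (α x : ℝ) : ℝ :=
  Real.Gamma (x + α) / (Real.Gamma (α + 1) * Real.Gamma x)

/-- The fractional sum `∇_1^{−(1−q)} ĥ_α(s) = Σ_{u=1}^s ĥ_{−q}(s−u+1)·ĥ_α(u)`. -/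
noncomputable def fracSum (q α : ℝ) (s : ℕ) : ℝ :=
  ∑ u ∈ Finset.Icc 1 s, hhat (-q) ((s : ℝ) - (u : ℝ) + 1) * hhat α (u : ℝ)

lemma hhat_nat_eq_Q (β : ℝ) (hβ : Real.Gamma (β + 1) ≠ 0) (n : ℕ) :
    hhat β ((n : ℝ) + 1) = Q β n := by
  induction n with
  | zero =>
    simp only [Nat.cast_zero, zero_add, Q_zero, hhat]
    rw [Real.Gamma_one, add_comm, mul_one, div_self hβ]
  | succ n ih =>
    have hne : ((n : ℝ) + 1) + β ≠ 0 := by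
      intro h
      have hb : β + 1 = -(n : ℝ) := by linarith
      rw [hb, Real.Gamma_neg_nat_eq_zero] at hβ
      exact hβ rfl
    have hn1 : ((n : ℝ) + 1) ≠ 0 := by positivity
    have e1 : ((n + 1 : ℕ) : ℝ) + 1 + β = (((n : ℝ) + 1) + β) + 1 := by push_cast; ring
    have e2 : ((n + 1 : ℕ) : ℝ) + 1 = ((n : ℝ) + 1) + 1 := by push_cast; ring
    rw [hhat, e1, e2, Real.Gamma_add_one hne, Real.Gamma_add_one hn1, Q_succ, ← ih, hhat]
    rw [div_mul_div_comm]
    ring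

lemma fracSum_eq (q α : ℝ) (hq : Real.Gamma (-q + 1) ≠ 0) (hα : Real.Gamma (α + 1) ≠ 0)
    (n : ℕ) : fracSum q α (n + 1) = Q (α - q + 1) n := by
  rw [fracSum, show Finset.Icc 1 (n + 1) = Finset.Ico 1 (n + 2) from (Finset.Ico_add_one_right_eq_Icc 1 (n+1)).symm,
    Finset.sum_Ico_eq_sum_range]
  simp only [show n + 2 - 1 = n + 1 from rfl]
  have hterm : ∀ i ∈ Finset.range (n + 1),
      hhat (-q) (((n + 1 : ℕ) : ℝ) - ((1 + i : ℕ) : ℝ) + 1) * hhat α ((1 + i : ℕ) : ℝ)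
        = Q α i * Q (-q) (n - i) := by
    intro i hi
    have hin : i ≤ n := Nat.lt_succ_iff.mp (Finset.mem_range.mp hi)
    have c1 : ((n + 1 : ℕ) : ℝ) - ((1 + i : ℕ) : ℝ) + 1 = ((n - i : ℕ) : ℝ) + 1 := by
      push_cast [hin]; ring
    have c2 : ((1 + i : ℕ) : ℝ) = (i : ℝ) + 1 := by push_cast; ring
    rw [c1, c2, hhat_nat_eq_Q _ hq, hhat_nat_eq_Q _ hα, mul_comm]
  rw [Finset.sum_congr rfl hterm, ← Finset.Nat.sum_antidiagonal_eq_sum_range_succ_mk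
    (fun ij => Q α ij.1 * Q (-q) ij.2), Q_conv]
  congr 1

/-- The Riemann–Liouville fractional difference of order `q` of `ĥ_α`:
`∇_1^q ĥ_α(t) = D(t) − D(t−1) = ĥ_{α−q}(t)` where `D = ∇_1^{−(1−q)} ĥ_α`. -/
theorem frac_diff_hhat (q α : ℝ) (hq0 : 0 < q) (hq1 : q < 1)
    (hα : ∀ n : ℕ, α ≠ -(n : ℝ)) (hαq : ∀ n : ℕ, α - q + 1 ≠ -(n : ℝ))
    (t : ℕ) (ht : 1 ≤ t) :
    fracSum q α t - fracSum q α (t - 1) = hhat (α - q) (t : ℝ) := by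
  have hΓq : Real.Gamma (-q + 1) ≠ 0 := by
    apply Real.Gamma_ne_zero
    intro m h
    have : (m : ℝ) ≥ 0 := Nat.cast_nonneg m
    linarith
  have hΓα : Real.Gamma (α + 1) ≠ 0 := by
    apply Real.Gamma_ne_zero
    intro m h
    exact hα (m + 1) (by push_cast; linarith)
  have hΓ : Real.Gamma (α - q + 1) ≠ 0 := Real.Gamma_ne_zero hαq
  obtain ⟨n, rfl⟩ : ∃ n, t = n + 1 := ⟨t - 1, (Nat.succ_pred_eq_of_pos ht).symm⟩
  simp only [Nat.add_sub_cancel]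
  cases n with
  | zero =>
    have h0 : fracSum q α 0 = 0 := by simp [fracSum]
    have h1 : hhat (α - q) ((1 : ℕ) : ℝ) = Q (α - q) 0 := by
      have := hhat_nat_eq_Q (α - q) hΓ 0
      simpa using this
    rw [fracSum_eq q α hΓq hΓα 0, h0, h1, Q_zero, Q_zero, sub_zero]
  | succ n =>
    rw [fracSum_eq q α hΓq hΓα (n + 1), fracSum_eq q α hΓq hΓα n,
      Q_pascal (α - q + 1) n]
    have e : α - q + 1 - 1 = α - q := by ring
    rw [e]
    have h2 : hhat (α - q) (((n + 2 : ℕ)) : ℝ) = Q (α - q) (n + 1) := by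
      have := hhat_nat_eq_Q (α - q) hΓ (n + 1)
      rw [← this]
      norm_num
      ring_nf
    push_cast at h2 ⊢
    rw [show (n:ℝ) + 1 + 1 = (n:ℝ) + 2 by ring, h2]
    ring
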